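/- The four-step SUB gadget of the membrane-creation construction is correct: starting from configuration c l_i d in the skin with k copies of a_r, after four steps the system reaches configuration c l_j d with k−1 copies of a_r if k ≥ 1, or configuration c l_k d with zero copies of a_r if k = 0, with no other objects remaining and at most two membranes existing at any intermediate time. -/

import Mathlib

attribute [local instance 5] Classical.propDecidable

/-- Targets for rules of P systems with membrane creation. -/
inductive MTgt : Type
  | here | out | inj (j : ℕ)

/-- Rules of a catalytic P system with membrane creation (`c` denotes the single
catalyst): non-cooperative evolution rules `a → (u, tar)` (`cata = false`),
catalytic evolution rules `c a → c (u, tar)` (`cata = true`), catalytic membrane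
creation rules `c a → c [ u ]_lbl`, and membrane dissolution rules `a → u δ`. -/
inductive MCreRule (O : Type) : Type
  | evo (cata : Bool) (a : O) (u : Multiset O) (tar : MTgt)
  | create (a : O) (lbl : ℕ) (u : Multiset O)
  | diss (a : O) (u : Multiset O)

/-- A P system with membrane creation, one catalyst, starting with one membrane
(the skin, which carries label 1 and is never dissolved); `R i` is the (finite)
set of rules associated with membranes labeled `i`. -/
structure MCreSystem (O : Type) where
  cat : O
  R : ℕ → Set (MCreRule O)
  w0 : Multiset O

/-- A configuration: the skin contents, the list of inner membranes (label and
contents; membranes at most one level deep, as in computations using at most two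
membranes), and the environment contents. -/
abbrev MCfg (O : Type) := Multiset O × List (ℕ × Multiset O) × Multiset O

variable {O : Type} [DecidableEq O]

/-- The multiset consumed by one application of a rule. -/
def mlhs (c : O) : MCreRule O → Multiset O
  | MCreRule.evo ca a _ _ => if ca then {c, a} else {a}
  | MCreRule.create a _ _ => {c, a}
  | MCreRule.diss a _ => {a}

/-- The rule is a dissolution rule. -/
def isDiss {O : Type} : MCreRule O → Prop
  | MCreRule.diss _ _ => True
  | _ => False

/-- The multiset produced in the membrane where the rule is applied
(the catalyst never moves). -/
def hereProd (c : O) : MCreRule O → Multiset O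
  | MCreRule.evo ca _ u tar =>
      (match tar with | MTgt.here => u | _ => 0) + (if ca then {c} else 0)
  | MCreRule.create _ _ _ => {c}
  | MCreRule.diss _ u => u

/-- The multiset sent to the surrounding region. -/
def outProd : MCreRule O → Multiset O
  | MCreRule.evo _ _ u MTgt.out => u
  | _ => 0

/-- The multiset sent to the chosen inner membrane (for rules with target `in_j`). -/
def inProd : MCreRule O → Multiset O
  | MCreRule.evo _ _ u (MTgt.inj _) => u
  | _ => 0

/-- The membranes created by one application of the rule. -/
def createdOf : MCreRule O → Multiset (ℕ × Multiset O)
  | MCreRule.create _ l u => {(l, u)}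
  | _ => 0

/-- One maximally parallel step of the P system with membrane creation. -/
def MStep (Q : MCreSystem O) : MCfg O → MCfg O → Prop := fun cfg cfg' =>
  ∃ (skinApps : Multiset (MCreRule O × ℕ))
    (innerApps : Fin cfg.2.1.length → Multiset (MCreRule O)),
    -- notation
    (let inners := cfg.2.1
     let n := inners.length
     let Dissolved : Fin n → Prop := fun d => ∃ ρ ∈ innerApps d, isDiss ρ
     let consS := (skinApps.map (fun p => mlhs Q.cat p.1)).sum
     let consI : Fin n → Multiset O := fun d => ((innerApps d).map (mlhs Q.cat)).sum
     let inSent : Fin n → Multiset O := fun d =>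
       ((skinApps.filter (fun p => p.2 = (d : ℕ))).map (fun p => inProd p.1)).sum
     let keep : Fin n → Multiset O := fun d =>
       (inners.get d).2 - consI d + ((innerApps d).map (hereProd Q.cat)).sum + inSent d
     -- at least one rule is applied
     (skinApps ≠ 0 ∨ ∃ d, innerApps d ≠ 0) ∧
     -- validity of the skin applications
     (∀ p ∈ skinApps, p.1 ∈ Q.R 1 ∧
        (∀ ca a u j, p.1 = MCreRule.evo ca a u (MTgt.inj j) →
          ∃ h : p.2 < n, (inners.get ⟨p.2, h⟩).1 = j ∧ ¬ Dissolved ⟨p.2, h⟩)) ∧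
     consS ≤ cfg.1 ∧
     -- validity of the inner applications (inner membranes have no children)
     (∀ d : Fin n, ∀ ρ ∈ innerApps d, ρ ∈ Q.R (inners.get d).1 ∧
        (∀ ca a u j, ρ ≠ MCreRule.evo ca a u (MTgt.inj j))) ∧
     (∀ d : Fin n, consI d ≤ (inners.get d).2) ∧
     -- maximality in the skin
     (¬ ∃ ρ ∈ Q.R 1, mlhs Q.cat ρ ≤ cfg.1 - consS ∧
        (∀ ca a u j, ρ = MCreRule.evo ca a u (MTgt.inj j) →
          ∃ d : Fin n, (inners.get d).1 = j ∧ ¬ Dissolved d)) ∧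
     -- maximality in each inner membrane
     (∀ d : Fin n, ¬ ∃ ρ ∈ Q.R (inners.get d).1,
        (∀ ca a u j, ρ ≠ MCreRule.evo ca a u (MTgt.inj j)) ∧
        mlhs Q.cat ρ ≤ (inners.get d).2 - consI d) ∧
     -- the new skin contents
     cfg'.1 = cfg.1 - consS + (skinApps.map (fun p => hereProd Q.cat p.1)).sum +
        (∑ d : Fin n, ((innerApps d).map outProd).sum) +
        (∑ d : Fin n, if Dissolved d then keep d else 0) ∧
     -- the new environment contents
     cfg'.2.2 = cfg.2.2 + (skinApps.map (fun p => outProd p.1)).sum ∧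
     -- the new list of inner membranes: the surviving evolved membranes followed by
     -- the newly created ones
     (∃ creat : List (ℕ × Multiset O),
        (creat : Multiset (ℕ × Multiset O)) =
          (skinApps.map (fun p => createdOf p.1)).sum +
            ∑ d : Fin n, ((innerApps d).map createdOf).sum ∧
        cfg'.2.1 = ((List.finRange n).filterMap (fun d =>
            if Dissolved d then none else some ((inners.get d).1, keep d))) ++ creat))

/-- No rule is applicable anywhere in the configuration. -/
def MHalted (Q : MCreSystem O) (cfg : MCfg O) : Prop :=
  (¬ ∃ ρ ∈ Q.R 1, mlhs Q.cat ρ ≤ cfg.1 ∧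
      (∀ ca a u j, ρ = MCreRule.evo ca a u (MTgt.inj j) →
        ∃ d : Fin cfg.2.1.length, (cfg.2.1.get d).1 = j)) ∧
  (∀ d : Fin cfg.2.1.length, ¬ ∃ ρ ∈ Q.R (cfg.2.1.get d).1,
      (∀ ca a u j, ρ ≠ MCreRule.evo ca a u (MTgt.inj j)) ∧
      mlhs Q.cat ρ ≤ (cfg.2.1.get d).2)

/-- The number of membranes of a configuration. -/
def memCount (cfg : MCfg O) : ℕ := 1 + cfg.2.1.length

/-- The initial configuration: one membrane (the skin) containing `w0`. -/
def minit (Q : MCreSystem O) : MCfg O := (Q.w0, [], 0)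

/-- `Ps(Q)`: the Parikh vectors (w.r.t. the output symbols `a i`) of the environment
contents of halting computations. -/
def MPs {k : ℕ} (Q : MCreSystem O) (a : Fin k → O) : Set (Fin k → ℕ) :=
  { v | ∃ cfg : MCfg O,
      Relation.ReflTransGen (MStep Q) (minit Q) cfg ∧ MHalted Q cfg ∧
      (∀ i, cfg.2.2.count (a i) = v i) ∧ (∀ x ∈ cfg.2.2, ∃ i, x = a i) }

/-! ### The SUB gadget of the membrane-creation construction -/

/-- The objects of the gadget for `l_i : (SUB(r), l_j, l_k)`:
the catalyst `c`, the labels `l_i, l_i', l_i'', l_j, l_k`, the auxiliary objects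
`d, d', d''` and the register symbol `a_r`. -/
inductive H9 : Type
  | c | li | li' | li'' | lj | lk | d | d' | d'' | ar
deriving DecidableEq

open H9 MCreRule MTgt

/-- The P system (fragment) realizing the gadget: skin rules
`c l_i → c [ l_i ]_{r+1}`, `d → d'`, `c a_r → c (a_r, in_{r+1})`,
`d' → (d', in_{r+1})`, `c l_i'' → c l_j`, `d'' → d`, and the rules
`l_i → l_i'`, `a_r → λ δ`, `l_i' → l_i''`, `d' → d''`, `l_i'' → l_k`, `d'' → d δ`
of the created membrane `r + 1`. -/
def Q9 (r : ℕ) : MCreSystem H9 where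
  cat := c
  R := fun i =>
    if i = 1 then
      {create li (r + 1) {li},
       evo false d {d'} MTgt.here,
       evo true ar {ar} (MTgt.inj (r + 1)),
       evo false d' {d'} (MTgt.inj (r + 1)),
       evo true li'' {lj} MTgt.here,
       evo false d'' {d} MTgt.here}
    else if i = r + 1 then
      {evo false li {li'} MTgt.here,
       diss ar 0,
       evo false li' {li''} MTgt.here,
       evo false d' {d''} MTgt.here,
       evo false li'' {lk} MTgt.here,
       diss d'' {d}}
    else ∅
  w0 := {c, li, d}

lemma step1 (r k : ℕ) (e : Multiset H9) :
    MStep (Q9 r) ({c, li, d} + Multiset.replicate k ar, [], e)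
      ({c, d'} + Multiset.replicate k ar, [(r + 1, ({li} : Multiset H9))], e) := by
  refine ⟨{(create li (r+1) {li}, 0), (evo false d {d'} MTgt.here, 0)},
    fun d => d.elim0, Or.inl (by simp), ?_, ?_, (fun d => d.elim0), (fun d => d.elim0),
    ?_, (fun d => d.elim0), ?_, ?_, ⟨[(r+1, {li})], ?_, ?_⟩⟩
  · intro p hp
    simp only [Multiset.insert_eq_cons, Multiset.mem_cons, Multiset.mem_singleton] at hp
    rcases hp with rfl | rfl
    · exact ⟨by simp [Q9], by intro ca a u j h; simp at h⟩
    · exact ⟨by simp [Q9], by intro ca a u j h; simp at h⟩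
  · rw [Multiset.le_iff_count]; intro x
    cases x <;> simp [Q9, mlhs, Multiset.count_replicate]
  · rintro ⟨ρ, hρ, hle, -⟩
    simp only [Q9, if_pos rfl, Set.mem_insert_iff, Set.mem_singleton_iff] at hρ
    rcases hρ with rfl | rfl | rfl | rfl | rfl | rfl
    · have := Multiset.count_le_of_le c hle
      simp [Q9, mlhs, Multiset.count_sub, Multiset.count_replicate] at this
    · have := Multiset.count_le_of_le d hle
      simp [Q9, mlhs, Multiset.count_sub, Multiset.count_replicate] at this
    · have := Multiset.count_le_of_le c hle
      simp [Q9, mlhs, Multiset.count_sub, Multiset.count_replicate] at this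
    · have := Multiset.count_le_of_le d' hle
      simp [Q9, mlhs, Multiset.count_sub, Multiset.count_replicate] at this
    · have := Multiset.count_le_of_le c hle
      simp [Q9, mlhs, Multiset.count_sub, Multiset.count_replicate] at this
    · have := Multiset.count_le_of_le d'' hle
      simp [Q9, mlhs, Multiset.count_sub, Multiset.count_replicate] at this
  · ext x
    cases x <;> simp [Q9, mlhs, hereProd, Multiset.count_sub, Multiset.count_replicate,
      Finset.univ_eq_empty]
  · simp [outProd]
  · simp [createdOf]
  · simp

lemma step2 (r k : ℕ) (hr1 : r + 1 ≠ 1) (e : Multiset H9) :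
    MStep (Q9 r) ({c, d'} + Multiset.replicate (k + 1) ar, [(r + 1, ({li} : Multiset H9))], e)
      ({c} + Multiset.replicate k ar, [(r + 1, ({li', ar, d'} : Multiset H9))], e) := by
  have hnd : ¬ ∃ ρ ∈ ({evo false li {li'} MTgt.here} : Multiset (MCreRule H9)), isDiss ρ := by
    simp [isDiss]
  refine ⟨{(evo true ar {ar} (MTgt.inj (r+1)), 0), (evo false d' {d'} (MTgt.inj (r+1)), 0)},
    fun _ => {evo false li {li'} MTgt.here}, Or.inl (by simp), ?_, ?_, ?_, ?_, ?_, ?_, ?_, ?_,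
    ⟨[], ?_, ?_⟩⟩
  · intro p hp
    simp only [Multiset.insert_eq_cons, Multiset.mem_cons, Multiset.mem_singleton] at hp
    rcases hp with rfl | rfl
    · refine ⟨by simp [Q9], ?_⟩
      intro ca a u j h
      simp only [MCreRule.evo.injEq, MTgt.inj.injEq] at h
      obtain ⟨-, -, -, rfl⟩ := h
      exact ⟨by norm_num, by simp, hnd⟩
    · refine ⟨by simp [Q9], ?_⟩
      intro ca a u j h
      simp only [MCreRule.evo.injEq, MTgt.inj.injEq] at h
      obtain ⟨-, -, -, rfl⟩ := h
      exact ⟨by norm_num, by simp, hnd⟩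
  · rw [Multiset.le_iff_count]; intro x
    cases x <;> simp [Q9, mlhs, Multiset.count_replicate]
  · intro d ρ hρ
    simp only [Multiset.mem_singleton] at hρ
    subst hρ
    exact ⟨by simp [Q9, hr1, show r ≠ 0 by omega], by intro ca a u j h; simp at h⟩
  · intro d
    rw [Multiset.le_iff_count]; intro x
    cases x <;> simp [Q9, mlhs]
  · rintro ⟨ρ, hρ, hle, -⟩
    simp only [Q9, if_pos rfl, Set.mem_insert_iff, Set.mem_singleton_iff] at hρ
    rcases hρ with rfl | rfl | rfl | rfl | rfl | rfl
    · have := Multiset.count_le_of_le c hle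
      simp [Q9, mlhs, Multiset.count_sub, Multiset.count_replicate] at this
    · have := Multiset.count_le_of_le d hle
      simp [Q9, mlhs, Multiset.count_sub, Multiset.count_replicate] at this
    · have := Multiset.count_le_of_le c hle
      simp [Q9, mlhs, Multiset.count_sub, Multiset.count_replicate] at this
    · have := Multiset.count_le_of_le d' hle
      simp [Q9, mlhs, Multiset.count_sub, Multiset.count_replicate] at this
    · have := Multiset.count_le_of_le c hle
      simp [Q9, mlhs, Multiset.count_sub, Multiset.count_replicate] at this
    · have := Multiset.count_le_of_le d'' hle
      simp [Q9, mlhs, Multiset.count_sub, Multiset.count_replicate] at this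
  · intro d
    fin_cases d
    rintro ⟨ρ, hρ, -, hle⟩
    simp only [List.get] at hρ hle
    simp only [Q9, if_neg hr1, if_pos rfl, Set.mem_insert_iff, Set.mem_singleton_iff] at hρ
    rcases hρ with rfl | rfl | rfl | rfl | rfl | rfl
    · have := Multiset.count_le_of_le li hle
      simp [Q9, mlhs, Multiset.count_sub] at this
    · have := Multiset.count_le_of_le ar hle
      simp [Q9, mlhs, Multiset.count_sub] at this
    · have := Multiset.count_le_of_le li' hle
      simp [Q9, mlhs, Multiset.count_sub] at this
    · have := Multiset.count_le_of_le d' hle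
      simp [Q9, mlhs, Multiset.count_sub] at this
    · have := Multiset.count_le_of_le li'' hle
      simp [Q9, mlhs, Multiset.count_sub] at this
    · have := Multiset.count_le_of_le d'' hle
      simp [Q9, mlhs, Multiset.count_sub] at this
  · ext x
    cases x <;> simp [Q9, mlhs, hereProd, outProd, isDiss, Multiset.count_sub,
      Multiset.count_replicate, Fin.sum_univ_one]
  · simp [outProd]
  · simp [createdOf]
  · simp [Q9, mlhs, hereProd, inProd, isDiss, List.finRange]
    ext x
    cases x <;> simp [inProd, Multiset.count_sub, Multiset.filter_singleton,
      Multiset.filter_cons] <;> omega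

lemma step3 (r k : ℕ) (hr1 : r + 1 ≠ 1) (e : Multiset H9) :
    MStep (Q9 r) ({c} + Multiset.replicate k ar, [(r + 1, ({li', ar, d'} : Multiset H9))], e)
      ({c, li'', d''} + Multiset.replicate k ar, [], e) := by
  have hd : ∃ ρ ∈ ({evo false li' {li''} MTgt.here, evo false d' {d''} MTgt.here,
      diss ar 0} : Multiset (MCreRule H9)), isDiss ρ := ⟨diss ar 0, by simp, trivial⟩
  refine ⟨0, fun _ => {evo false li' {li''} MTgt.here, evo false d' {d''} MTgt.here,
      diss ar 0}, Or.inr ⟨⟨0, by simp⟩, by simp⟩, by simp, by simp, ?_, ?_, ?_, ?_, ?_, ?_,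
    ⟨[], by simp [createdOf], ?_⟩⟩
  · intro d ρ hρ
    simp only [Multiset.insert_eq_cons, Multiset.mem_cons, Multiset.mem_singleton] at hρ
    rcases hρ with rfl | rfl | rfl
    · exact ⟨by simp [Q9, hr1, show r ≠ 0 by omega], by intro ca a u j h; simp at h⟩
    · exact ⟨by simp [Q9, hr1, show r ≠ 0 by omega], by intro ca a u j h; simp at h⟩
    · exact ⟨by simp [Q9, hr1, show r ≠ 0 by omega], by intro ca a u j h; simp at h⟩
  · intro d
    rw [Multiset.le_iff_count]; intro x
    cases x <;> simp [Q9, mlhs]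
  · rintro ⟨ρ, hρ, hle, hinj⟩
    simp only [Q9, if_pos rfl, Set.mem_insert_iff, Set.mem_singleton_iff] at hρ
    rcases hρ with rfl | rfl | rfl | rfl | rfl | rfl
    · have := Multiset.count_le_of_le li hle
      simp [Q9, mlhs, Multiset.count_sub, Multiset.count_replicate] at this
    · have := Multiset.count_le_of_le d hle
      simp [Q9, mlhs, Multiset.count_sub, Multiset.count_replicate] at this
    · obtain ⟨dm, -, hnd⟩ := hinj true ar {ar} (r + 1) rfl
      exact hnd hd
    · have := Multiset.count_le_of_le d' hle
      simp [Q9, mlhs, Multiset.count_sub, Multiset.count_replicate] at this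
    · have := Multiset.count_le_of_le li'' hle
      simp [Q9, mlhs, Multiset.count_sub, Multiset.count_replicate] at this
    · have := Multiset.count_le_of_le d'' hle
      simp [Q9, mlhs, Multiset.count_sub, Multiset.count_replicate] at this
  · intro d
    fin_cases d
    rintro ⟨ρ, hρ, -, hle⟩
    simp only [List.get] at hρ hle
    simp only [Q9, if_neg hr1, if_pos rfl, Set.mem_insert_iff, Set.mem_singleton_iff] at hρ
    rcases hρ with rfl | rfl | rfl | rfl | rfl | rfl
    · have := Multiset.count_le_of_le li hle
      simp [Q9, mlhs, Multiset.count_sub] at this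
    · have := Multiset.count_le_of_le ar hle
      simp [Q9, mlhs, Multiset.count_sub] at this
    · have := Multiset.count_le_of_le li' hle
      simp [Q9, mlhs, Multiset.count_sub] at this
    · have := Multiset.count_le_of_le d' hle
      simp [Q9, mlhs, Multiset.count_sub] at this
    · have := Multiset.count_le_of_le li'' hle
      simp [Q9, mlhs, Multiset.count_sub] at this
    · have := Multiset.count_le_of_le d'' hle
      simp [Q9, mlhs, Multiset.count_sub] at this
  · ext x
    cases x <;> simp [Q9, mlhs, hereProd, outProd, inProd, isDiss, Multiset.count_sub,
      Multiset.count_replicate, Fin.sum_univ_one, Multiset.filter_cons,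
      Multiset.filter_singleton] <;> omega
  · simp [outProd]
  · simp [isDiss, List.finRange]

lemma step4 (r k : ℕ) (e : Multiset H9) :
    MStep (Q9 r) ({c, li'', d''} + Multiset.replicate k ar, [], e)
      ({c, lj, d} + Multiset.replicate k ar, [], e) := by
  refine ⟨{(evo true li'' {lj} MTgt.here, 0), (evo false d'' {d} MTgt.here, 0)},
    fun d => d.elim0, Or.inl (by simp), ?_, ?_, (fun d => d.elim0), (fun d => d.elim0),
    ?_, (fun d => d.elim0), ?_, ?_, ⟨[], by simp [createdOf], by simp⟩⟩
  · intro p hp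
    simp only [Multiset.insert_eq_cons, Multiset.mem_cons, Multiset.mem_singleton] at hp
    rcases hp with rfl | rfl
    · exact ⟨by simp [Q9], by intro ca a u j h; simp at h⟩
    · exact ⟨by simp [Q9], by intro ca a u j h; simp at h⟩
  · rw [Multiset.le_iff_count]; intro x
    cases x <;> simp [Q9, mlhs, Multiset.count_replicate]
  · rintro ⟨ρ, hρ, hle, -⟩
    simp only [Q9, if_pos rfl, Set.mem_insert_iff, Set.mem_singleton_iff] at hρ
    rcases hρ with rfl | rfl | rfl | rfl | rfl | rfl
    · have := Multiset.count_le_of_le c hle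
      simp [Q9, mlhs, Multiset.count_sub, Multiset.count_replicate] at this
    · have := Multiset.count_le_of_le d hle
      simp [Q9, mlhs, Multiset.count_sub, Multiset.count_replicate] at this
    · have := Multiset.count_le_of_le c hle
      simp [Q9, mlhs, Multiset.count_sub, Multiset.count_replicate] at this
    · have := Multiset.count_le_of_le d' hle
      simp [Q9, mlhs, Multiset.count_sub, Multiset.count_replicate] at this
    · have := Multiset.count_le_of_le c hle
      simp [Q9, mlhs, Multiset.count_sub, Multiset.count_replicate] at this
    · have := Multiset.count_le_of_le d'' hle
      simp [Q9, mlhs, Multiset.count_sub, Multiset.count_replicate] at this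
  · ext x
    cases x <;> simp [Q9, mlhs, hereProd, Multiset.count_sub, Multiset.count_replicate,
      Finset.univ_eq_empty]
  · simp [outProd]

lemma step2' (r : ℕ) (hr1 : r + 1 ≠ 1) (e : Multiset H9) :
    MStep (Q9 r) ({c, d'}, [(r + 1, ({li} : Multiset H9))], e)
      ({c}, [(r + 1, ({li', d'} : Multiset H9))], e) := by
  have hnd : ¬ ∃ ρ ∈ ({evo false li {li'} MTgt.here} : Multiset (MCreRule H9)), isDiss ρ := by
    simp [isDiss]
  refine ⟨{(evo false d' {d'} (MTgt.inj (r+1)), 0)},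
    fun _ => {evo false li {li'} MTgt.here}, Or.inl (by simp), ?_, ?_, ?_, ?_, ?_, ?_, ?_, ?_,
    ⟨[], by simp [createdOf], ?_⟩⟩
  · intro p hp
    simp only [Multiset.mem_singleton] at hp
    subst hp
    refine ⟨by simp [Q9], ?_⟩
    intro ca a u j h
    simp only [MCreRule.evo.injEq, MTgt.inj.injEq] at h
    obtain ⟨-, -, -, rfl⟩ := h
    exact ⟨by norm_num, by simp, hnd⟩
  · rw [Multiset.le_iff_count]; intro x
    cases x <;> simp [Q9, mlhs]
  · intro d ρ hρ
    simp only [Multiset.mem_singleton] at hρ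
    subst hρ
    exact ⟨by simp [Q9, hr1, show r ≠ 0 by omega], by intro ca a u j h; simp at h⟩
  · intro d
    rw [Multiset.le_iff_count]; intro x
    cases x <;> simp [Q9, mlhs]
  · rintro ⟨ρ, hρ, hle, -⟩
    simp only [Q9, if_pos rfl, Set.mem_insert_iff, Set.mem_singleton_iff] at hρ
    rcases hρ with rfl | rfl | rfl | rfl | rfl | rfl
    · have := Multiset.count_le_of_le li hle
      simp [Q9, mlhs, Multiset.count_sub] at this
    · have := Multiset.count_le_of_le d hle
      simp [Q9, mlhs, Multiset.count_sub] at this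
    · have := Multiset.count_le_of_le ar hle
      simp [Q9, mlhs, Multiset.count_sub] at this
    · have := Multiset.count_le_of_le d' hle
      simp [Q9, mlhs, Multiset.count_sub] at this
    · have := Multiset.count_le_of_le li'' hle
      simp [Q9, mlhs, Multiset.count_sub] at this
    · have := Multiset.count_le_of_le d'' hle
      simp [Q9, mlhs, Multiset.count_sub] at this
  · intro d
    fin_cases d
    rintro ⟨ρ, hρ, -, hle⟩
    simp only [List.get] at hρ hle
    simp only [Q9, if_neg hr1, if_pos rfl, Set.mem_insert_iff, Set.mem_singleton_iff] at hρ
    rcases hρ with rfl | rfl | rfl | rfl | rfl | rfl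
    · have := Multiset.count_le_of_le li hle
      simp [Q9, mlhs, Multiset.count_sub] at this
    · have := Multiset.count_le_of_le ar hle
      simp [Q9, mlhs, Multiset.count_sub] at this
    · have := Multiset.count_le_of_le li' hle
      simp [Q9, mlhs, Multiset.count_sub] at this
    · have := Multiset.count_le_of_le d' hle
      simp [Q9, mlhs, Multiset.count_sub] at this
    · have := Multiset.count_le_of_le li'' hle
      simp [Q9, mlhs, Multiset.count_sub] at this
    · have := Multiset.count_le_of_le d'' hle
      simp [Q9, mlhs, Multiset.count_sub] at this
  · ext x
    cases x <;> simp [Q9, mlhs, hereProd, outProd, isDiss, Multiset.count_sub,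
      Fin.sum_univ_one]
  · simp [outProd]
  · simp [Q9, mlhs, hereProd, inProd, isDiss, List.finRange]
    ext x
    cases x <;> simp [inProd, Multiset.count_sub, Multiset.filter_singleton,
      Multiset.filter_cons]

lemma step3' (r : ℕ) (hr1 : r + 1 ≠ 1) (e : Multiset H9) :
    MStep (Q9 r) ({c}, [(r + 1, ({li', d'} : Multiset H9))], e)
      ({c}, [(r + 1, ({li'', d''} : Multiset H9))], e) := by
  refine ⟨0, fun _ => {evo false li' {li''} MTgt.here, evo false d' {d''} MTgt.here},
    Or.inr ⟨⟨0, by simp⟩, by simp⟩, by simp, by simp, ?_, ?_, ?_, ?_, ?_, ?_,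
    ⟨[], by simp [createdOf], ?_⟩⟩
  · intro d ρ hρ
    simp only [Multiset.insert_eq_cons, Multiset.mem_cons, Multiset.mem_singleton] at hρ
    rcases hρ with rfl | rfl
    · exact ⟨by simp [Q9, hr1, show r ≠ 0 by omega], by intro ca a u j h; simp at h⟩
    · exact ⟨by simp [Q9, hr1, show r ≠ 0 by omega], by intro ca a u j h; simp at h⟩
  · intro d
    rw [Multiset.le_iff_count]; intro x
    cases x <;> simp [Q9, mlhs]
  · rintro ⟨ρ, hρ, hle, -⟩
    simp only [Q9, if_pos rfl, Set.mem_insert_iff, Set.mem_singleton_iff] at hρ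
    rcases hρ with rfl | rfl | rfl | rfl | rfl | rfl
    · have := Multiset.count_le_of_le li hle
      simp [Q9, mlhs, Multiset.count_sub] at this
    · have := Multiset.count_le_of_le d hle
      simp [Q9, mlhs, Multiset.count_sub] at this
    · have := Multiset.count_le_of_le ar hle
      simp [Q9, mlhs, Multiset.count_sub] at this
    · have := Multiset.count_le_of_le d' hle
      simp [Q9, mlhs, Multiset.count_sub] at this
    · have := Multiset.count_le_of_le li'' hle
      simp [Q9, mlhs, Multiset.count_sub] at this
    · have := Multiset.count_le_of_le d'' hle
      simp [Q9, mlhs, Multiset.count_sub] at this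
  · intro d
    fin_cases d
    rintro ⟨ρ, hρ, -, hle⟩
    simp only [List.get] at hρ hle
    simp only [Q9, if_neg hr1, if_pos rfl, Set.mem_insert_iff, Set.mem_singleton_iff] at hρ
    rcases hρ with rfl | rfl | rfl | rfl | rfl | rfl
    · have := Multiset.count_le_of_le li hle
      simp [Q9, mlhs, Multiset.count_sub] at this
    · have := Multiset.count_le_of_le ar hle
      simp [Q9, mlhs, Multiset.count_sub] at this
    · have := Multiset.count_le_of_le li' hle
      simp [Q9, mlhs, Multiset.count_sub] at this
    · have := Multiset.count_le_of_le d' hle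
      simp [Q9, mlhs, Multiset.count_sub] at this
    · have := Multiset.count_le_of_le li'' hle
      simp [Q9, mlhs, Multiset.count_sub] at this
    · have := Multiset.count_le_of_le d'' hle
      simp [Q9, mlhs, Multiset.count_sub] at this
  · ext x
    cases x <;> simp [Q9, mlhs, hereProd, outProd, isDiss, Multiset.count_sub,
      Fin.sum_univ_one]
  · simp [outProd]
  · simp [Q9, mlhs, hereProd, inProd, isDiss, List.finRange]

lemma step4' (r : ℕ) (hr1 : r + 1 ≠ 1) (e : Multiset H9) :
    MStep (Q9 r) ({c}, [(r + 1, ({li'', d''} : Multiset H9))], e)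
      (({c, lk, d} : Multiset H9), [], e) := by
  refine ⟨0, fun _ => {evo false li'' {lk} MTgt.here, diss d'' {d}},
    Or.inr ⟨⟨0, by simp⟩, by simp⟩, by simp, by simp, ?_, ?_, ?_, ?_, ?_, ?_,
    ⟨[], by simp [createdOf], ?_⟩⟩
  · intro d ρ hρ
    simp only [Multiset.insert_eq_cons, Multiset.mem_cons, Multiset.mem_singleton] at hρ
    rcases hρ with rfl | rfl
    · exact ⟨by simp [Q9, hr1, show r ≠ 0 by omega], by intro ca a u j h; simp at h⟩
    · exact ⟨by simp [Q9, hr1, show r ≠ 0 by omega], by intro ca a u j h; simp at h⟩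
  · intro d
    rw [Multiset.le_iff_count]; intro x
    cases x <;> simp [Q9, mlhs]
  · rintro ⟨ρ, hρ, hle, -⟩
    simp only [Q9, if_pos rfl, Set.mem_insert_iff, Set.mem_singleton_iff] at hρ
    rcases hρ with rfl | rfl | rfl | rfl | rfl | rfl
    · have := Multiset.count_le_of_le li hle
      simp [Q9, mlhs, Multiset.count_sub] at this
    · have := Multiset.count_le_of_le d hle
      simp [Q9, mlhs, Multiset.count_sub] at this
    · have := Multiset.count_le_of_le ar hle
      simp [Q9, mlhs, Multiset.count_sub] at this
    · have := Multiset.count_le_of_le d' hle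
      simp [Q9, mlhs, Multiset.count_sub] at this
    · have := Multiset.count_le_of_le li'' hle
      simp [Q9, mlhs, Multiset.count_sub] at this
    · have := Multiset.count_le_of_le d'' hle
      simp [Q9, mlhs, Multiset.count_sub] at this
  · intro d
    fin_cases d
    rintro ⟨ρ, hρ, -, hle⟩
    simp only [List.get] at hρ hle
    simp only [Q9, if_neg hr1, if_pos rfl, Set.mem_insert_iff, Set.mem_singleton_iff] at hρ
    rcases hρ with rfl | rfl | rfl | rfl | rfl | rfl
    · have := Multiset.count_le_of_le li hle
      simp [Q9, mlhs, Multiset.count_sub] at this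
    · have := Multiset.count_le_of_le ar hle
      simp [Q9, mlhs, Multiset.count_sub] at this
    · have := Multiset.count_le_of_le li' hle
      simp [Q9, mlhs, Multiset.count_sub] at this
    · have := Multiset.count_le_of_le d' hle
      simp [Q9, mlhs, Multiset.count_sub] at this
    · have := Multiset.count_le_of_le li'' hle
      simp [Q9, mlhs, Multiset.count_sub] at this
    · have := Multiset.count_le_of_le d'' hle
      simp [Q9, mlhs, Multiset.count_sub] at this
  · ext x
    cases x <;> simp [Q9, mlhs, hereProd, outProd, isDiss, Multiset.count_sub,
      Fin.sum_univ_one, Multiset.filter_cons, Multiset.filter_singleton] <;> omega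
  · simp [outProd]
  · simp [isDiss, List.finRange]

/-- correctness of the four-step SUB gadget.  Starting from `c l_i d`
in the skin together with `k` copies of `a_r`, after four steps the system reaches
`c l_j d` with `k - 1` copies of `a_r` if `k ≥ 1`, and `c l_k d` with no copy of
`a_r` if `k = 0`; in both cases no inner membrane and no other objects remain, and
at most two membranes exist at any intermediate time. -/
theorem statement9 (r k : ℕ) (hr : r = 1 ∨ r = 2) (e : Multiset H9)
    (cfg0 : MCfg H9) (h0 : cfg0 = ({c, li, d} + Multiset.replicate k ar, [], e)) :
    (1 ≤ k →
      ∃ c1 c2 c3 : MCfg H9,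
        MStep (Q9 r) cfg0 c1 ∧ MStep (Q9 r) c1 c2 ∧ MStep (Q9 r) c2 c3 ∧
        MStep (Q9 r) c3 ({c, lj, d} + Multiset.replicate (k - 1) ar, [], e) ∧
        memCount c1 ≤ 2 ∧ memCount c2 ≤ 2 ∧ memCount c3 ≤ 2) ∧
    (k = 0 →
      ∃ c1 c2 c3 : MCfg H9,
        MStep (Q9 r) cfg0 c1 ∧ MStep (Q9 r) c1 c2 ∧ MStep (Q9 r) c2 c3 ∧
        MStep (Q9 r) c3 (({c, lk, d} : Multiset H9), [], e) ∧
        memCount c1 ≤ 2 ∧ memCount c2 ≤ 2 ∧ memCount c3 ≤ 2) := by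

  have hr1 : r + 1 ≠ 1 := by rcases hr with rfl | rfl <;> norm_num
  subst h0
  constructor
  · intro hk
    obtain ⟨m, rfl⟩ : ∃ m, k = m + 1 := ⟨k - 1, by omega⟩
    refine ⟨_, _, _, step1 r (m + 1) e, step2 r m hr1 e, step3 r m hr1 e, ?_, ?_, ?_, ?_⟩
    · simpa using step4 r m e
    · simp [memCount]
    · simp [memCount]
    · simp [memCount]
  · intro hk
    subst hk
    refine ⟨({c, d'}, [(r + 1, {li})], e), _, _, ?_, step2' r hr1 e, step3' r hr1 e,
      step4' r hr1 e, ?_, ?_, ?_⟩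
    · simpa using step1 r 0 e
    · simp [memCount]
    · simp [memCount]
    · simp [memCount]
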